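/- If k divides n, then the path P_k with k edges divides the hypercube Q_n. -/

import Mathlib

open SimpleGraph Finset

/-- `H` divides `G`: the edge set of `G` can be partitioned into edge sets of
subgraphs of `G`, each isomorphic to `H`. -/
def GraphDivides {α β : Type} (H : SimpleGraph α) (G : SimpleGraph β) : Prop :=
  ∃ (ι : Type) (f : ι → G.Subgraph),
    (∀ i, Nonempty (H ≃g (f i).coe)) ∧
    ∀ e ∈ G.edgeSet, ∃! i, e ∈ (f i).edgeSet

/-- The `n`-dimensional hypercube graph. -/
def cube (n : ℕ) : SimpleGraph (Fin n → ZMod 2) where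
  Adj x y := hammingDist x y = 1
  symm := ⟨fun x y h => by (try simp only at h ⊢); rwa [hammingDist_comm]⟩
  loopless := ⟨fun x h => by simp [hammingDist_self] at h⟩

namespace PDC

lemma z2 : ∀ a : ZMod 2, a + 1 + 1 = a := by decide

lemma z2' : ∀ a c : ZMod 2, a ≠ c → c = a + 1 := by decide

lemma z2'' : ∀ a : ZMod 2, a ≠ 0 → a = 1 := by decide

def flip {n : ℕ} (d : Fin n) (x : Fin n → ZMod 2) : Fin n → ZMod 2 :=
  fun j => x j + (if j = d then 1 else 0)

lemma flip_flip {n : ℕ} (d : Fin n) (x : Fin n → ZMod 2) : flip d (flip d x) = x := by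
  funext j; simp only [flip]; split
  · exact z2 _
  · simp

lemma flip_apply_ne {n : ℕ} (d : Fin n) (x : Fin n → ZMod 2) {j : Fin n} (h : j ≠ d) :
    flip d x j = x j := by simp [flip, h]

lemma flip_apply_self {n : ℕ} (d : Fin n) (x : Fin n → ZMod 2) :
    flip d x d = x d + 1 := by simp [flip]

/-- vertex of the path: start `x`, block `b`, after `t` steps. -/
def vtx (k m : ℕ) (x : Fin (k*m) → ZMod 2) (b t : ℕ) : Fin (k*m) → ZMod 2 :=
  fun j => x j + (if b*k ≤ (j:ℕ) ∧ (j:ℕ) < b*k + t then 1 else 0)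

lemma vtx_vtx (k m : ℕ) (x : Fin (k*m) → ZMod 2) (b t : ℕ) :
    vtx k m (vtx k m x b t) b t = x := by
  funext j; simp only [vtx]; split
  · exact z2 _
  · simp

lemma vtx_flip (k m : ℕ) (d : Fin (k*m)) (x : Fin (k*m) → ZMod 2) (b t : ℕ) :
    vtx k m (flip d x) b t = flip d (vtx k m x b t) := by
  funext j; simp only [vtx, flip]; ring

lemma vtx_diff_iff (k m : ℕ) (x : Fin (k*m) → ZMod 2) (b t : ℕ) (j : Fin (k*m)) :
    vtx k m x b t j ≠ vtx k m x b (t+1) j ↔ (j:ℕ) = b*k + t := by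
  simp only [vtx, ne_eq, add_right_inj]
  by_cases h : (j:ℕ) = b*k + t
  · rw [if_neg (by omega), if_pos (by omega)]
    simpa [h] using (by decide : (0:ZMod 2) ≠ 1)
  · have heq : (b*k ≤ (j:ℕ) ∧ (j:ℕ) < b*k + (t+1)) ↔ (b*k ≤ (j:ℕ) ∧ (j:ℕ) < b*k + t) := by
      omega
    simp [heq, h]

lemma coord_lt (k m b t : ℕ) (hb : b < m) (ht : t < k) : b*k + t < k*m := by
  have e1 : (b+1)*k = b*k + k := by ring
  have h2 : (b+1)*k ≤ m*k := Nat.mul_le_mul_right k hb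
  have e2 : m*k = k*m := Nat.mul_comm m k
  omega

lemma cube_adj_step (k m : ℕ) (x : Fin (k*m) → ZMod 2) (b t : ℕ) (hb : b < m) (ht : t < k) :
    (cube (k*m)).Adj (vtx k m x b t) (vtx k m x b (t+1)) := by
  show hammingDist (vtx k m x b t) (vtx k m x b (t+1)) = 1
  refine Finset.card_eq_one.mpr ⟨⟨b*k + t, coord_lt k m b t hb ht⟩, ?_⟩
  ext j
  simp [hammingDist, vtx_diff_iff, Fin.ext_iff]

lemma vtx_inj (k m : ℕ) (x : Fin (k*m) → ZMod 2) (b : ℕ) {t t' : ℕ} (hb : b < m)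
    (ht : t ≤ k) (ht' : t' ≤ k) (h : vtx k m x b t = vtx k m x b t') : t = t' := by
  by_contra hne
  wlog hlt : t < t' generalizing t t'
  · exact this ht' ht h.symm (Ne.symm hne) (by omega)
  have hj : b*k + t < k*m := coord_lt k m b t hb (by omega)
  have hval : ((⟨b*k+t, hj⟩ : Fin (k*m)) : ℕ) = b*k + t := rfl
  have hc := congrFun h ⟨b*k+t, hj⟩
  simp only [vtx, hval] at hc
  rw [if_neg (by omega), if_pos (by omega)] at hc
  simp at hc

lemma vtx_succ_eq_flip (k m : ℕ) (x : Fin (k*m) → ZMod 2) (b t : ℕ) (d : Fin (k*m))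
    (hd : (d:ℕ) = b*k + t) :
    vtx k m x b (t+1) = flip d (vtx k m x b t) := by
  funext j
  simp only [vtx, flip]
  by_cases h : (j:ℕ) = b*k + t
  · have hjd : j = d := Fin.ext (by omega)
    rw [if_pos (show b*k ≤ (j:ℕ) ∧ (j:ℕ) < b*k+(t+1) by omega),
        if_neg (show ¬(b*k ≤ (j:ℕ) ∧ (j:ℕ) < b*k+t) by omega), if_pos hjd]
    ring
  · have hjd : j ≠ d := fun hh => h (by rw [hh]; exact hd)
    have heq : (b*k ≤ (j:ℕ) ∧ (j:ℕ) < b*k + (t+1)) ↔ (b*k ≤ (j:ℕ) ∧ (j:ℕ) < b*k + t) := by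
      omega
    simp only [heq, if_neg hjd, add_zero]

end PDC

namespace PDC

/-- parity of a start over block `b`. -/
def par (k m : ℕ) (b : ℕ) (x : Fin (k*m) → ZMod 2) : ZMod 2 :=
  ∑ j ∈ Finset.filter (fun j : Fin (k*m) => b*k ≤ (j:ℕ) ∧ (j:ℕ) < b*k + k) Finset.univ, x j

lemma par_flip (k m : ℕ) (b : ℕ) (x : Fin (k*m) → ZMod 2) (d : Fin (k*m))
    (hd1 : b*k ≤ (d:ℕ)) (hd2 : (d:ℕ) < b*k + k) :
    par k m b (flip d x) = par k m b x + 1 := by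
  unfold par flip
  rw [Finset.sum_add_distrib, Finset.sum_ite_eq' _ d (fun _ => (1:ZMod 2))]
  rw [if_pos (by simp [hd1, hd2])]

/-- the path subgraph with block `b` and start `x`. -/
def pathSub (k m : ℕ) (b : ℕ) (hb : b < m) (x : Fin (k*m) → ZMod 2) :
    (cube (k*m)).Subgraph where
  verts := Set.range fun t : Fin (k+1) => vtx k m x b t
  Adj a c := ∃ t : ℕ, t < k ∧ s(a,c) = s(vtx k m x b t, vtx k m x b (t+1))
  adj_sub := by
    rintro a c ⟨t, ht, hs⟩
    rcases Sym2.eq_iff.mp hs with ⟨rfl, rfl⟩ | ⟨rfl, rfl⟩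
    · exact cube_adj_step k m x b t hb ht
    · exact (cube_adj_step k m x b t hb ht).symm
  edge_vert := by
    rintro a c ⟨t, ht, hs⟩
    rcases Sym2.eq_iff.mp hs with ⟨rfl, rfl⟩ | ⟨rfl, rfl⟩
    · exact ⟨⟨t, by omega⟩, rfl⟩
    · exact ⟨⟨t+1, by omega⟩, rfl⟩
  symm := by
    refine ⟨?_⟩
    rintro a c ⟨t, ht, hs⟩
    exact ⟨t, ht, Sym2.eq_swap.trans hs⟩

lemma pathSub_iso (k m : ℕ) (b : ℕ) (hb : b < m) (x : Fin (k*m) → ZMod 2) :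
    Nonempty (pathGraph (k+1) ≃g (pathSub k m b hb x).coe) := by
  have hinj : Function.Injective (fun t : Fin (k+1) => vtx k m x b t) := by
    intro t t' h
    exact Fin.ext (vtx_inj k m x b hb (by omega) (by omega) h)
  refine ⟨⟨Equiv.ofInjective _ hinj, ?_⟩⟩
  intro a c
  show (pathSub k m b hb x).Adj _ _ ↔ _
  constructor
  · rintro ⟨t, ht, hs⟩
    rcases Sym2.eq_iff.mp hs with ⟨h1, h2⟩ | ⟨h1, h2⟩
    · have e1 : (a:ℕ) = t := vtx_inj k m x b hb (by omega) (by omega) h1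
      have e2 : (c:ℕ) = t+1 := vtx_inj k m x b hb (by omega) (by omega) h2
      exact pathGraph_adj.mpr (Or.inl (by omega))
    · have e1 : (a:ℕ) = t+1 := vtx_inj k m x b hb (by omega) (by omega) h1
      have e2 : (c:ℕ) = t := vtx_inj k m x b hb (by omega) (by omega) h2
      exact pathGraph_adj.mpr (Or.inr (by omega))
  · intro hadj
    rcases pathGraph_adj.mp hadj with h1 | h1
    · refine ⟨(a:ℕ), by omega, ?_⟩
      show s(vtx k m x b (a:ℕ), vtx k m x b (c:ℕ)) = s(vtx k m x b (a:ℕ), vtx k m x b ((a:ℕ)+1))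
      rw [show vtx k m x b ((a:ℕ)+1) = vtx k m x b (c:ℕ) from congrArg _ h1]
    · refine ⟨(c:ℕ), by omega, ?_⟩
      show s(vtx k m x b (a:ℕ), vtx k m x b (c:ℕ)) = s(vtx k m x b (c:ℕ), vtx k m x b ((c:ℕ)+1))
      rw [show vtx k m x b ((c:ℕ)+1) = vtx k m x b (a:ℕ) from congrArg _ h1]
      exact Sym2.eq_swap

end PDC

namespace PDC

theorem aux (k m : ℕ) (hk : 0 < k) : GraphDivides (pathGraph (k+1)) (cube (k*m)) := by
  refine ⟨{p : Fin m × (Fin (k*m) → ZMod 2) // par k m (↑p.1) p.2 = 0},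
    fun p => pathSub k m (↑p.1.1) p.1.1.isLt p.1.2,
    fun p => pathSub_iso k m (↑p.1.1) p.1.1.isLt p.1.2, ?_⟩
  intro e
  refine Sym2.ind (fun y z he => ?_) e
  have hyz : hammingDist y z = 1 := (SimpleGraph.mem_edgeSet (G := cube (k*m))).1 he
  obtain ⟨d, hd⟩ := Finset.card_eq_one.mp hyz
  have hdiff : ∀ j, y j ≠ z j ↔ j = d := by
    intro j
    rw [← Finset.mem_singleton, ← hd, Finset.mem_filter]
    simp
  have hz : z = flip d y := by
    funext j
    by_cases hj : j = d
    · subst hj; rw [flip_apply_self]; exact z2' _ _ ((hdiff j).mpr rfl)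
    · rw [flip_apply_ne _ _ hj]
      by_contra hne
      exact hj ((hdiff j).mp (Ne.symm hne))
  have hD : (d:ℕ) < k*m := d.isLt
  have hb : (d:ℕ)/k < m := (Nat.div_lt_iff_lt_mul hk).mpr (by rw [mul_comm m k]; exact hD)
  have hi : (d:ℕ)%k < k := Nat.mod_lt _ hk
  have hdk : ((d:ℕ)/k)*k + (d:ℕ)%k = (d:ℕ) := by
    rw [mul_comm]; exact Nat.div_add_mod _ _
  set x0 : Fin (k*m) → ZMod 2 := vtx k m y ((d:ℕ)/k) ((d:ℕ)%k) with hx0def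
  set x1 : Fin (k*m) → ZMod 2 := flip d x0 with hx1def
  have hx0y : vtx k m x0 ((d:ℕ)/k) ((d:ℕ)%k) = y := vtx_vtx k m y _ _
  have hx0z : vtx k m x0 ((d:ℕ)/k) ((d:ℕ)%k + 1) = z := by
    rw [vtx_succ_eq_flip k m x0 _ _ d hdk.symm, hx0y, ← hz]
  have hx1z : vtx k m x1 ((d:ℕ)/k) ((d:ℕ)%k) = z := by
    rw [hx1def, vtx_flip, hx0y, ← hz]
  have hx1y : vtx k m x1 ((d:ℕ)/k) ((d:ℕ)%k + 1) = y := by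
    rw [vtx_succ_eq_flip k m x1 _ _ d hdk.symm, hx1z, hz, flip_flip]
  have hvz : vtx k m z ((d:ℕ)/k) ((d:ℕ)%k) = x1 := by
    rw [hz, vtx_flip, ← hx0def, ← hx1def]
  have hpar1 : par k m ((d:ℕ)/k) x1 = par k m ((d:ℕ)/k) x0 + 1 :=
    par_flip k m _ x0 d (by omega) (by omega)
  -- key uniqueness fact
  have key : ∀ (b' : Fin m) (x' : Fin (k*m) → ZMod 2),
      s(y,z) ∈ (pathSub k m (↑b') b'.isLt x').edgeSet →
      ((d:ℕ)/k : ℕ) = ↑b' ∧ (x' = x0 ∨ x' = x1) := by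
    intro b' x' hm'
    rw [Subgraph.mem_edgeSet] at hm'
    obtain ⟨t, ht, hs⟩ := hm'
    have hj0lt : (b':ℕ)*k + t < k*m := coord_lt k m _ t b'.isLt ht
    set j0 : Fin (k*m) := ⟨(b':ℕ)*k + t, hj0lt⟩ with hj0def
    have hj0val : (j0:ℕ) = (b':ℕ)*k + t := rfl
    rcases Sym2.eq_iff.mp hs with ⟨hyu, hzv⟩ | ⟨hyv, hzu⟩
    · have hne : y j0 ≠ z j0 := by
        rw [hyu, hzv]; exact (vtx_diff_iff k m x' (↑b') t j0).mpr hj0val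
      have hval : (b':ℕ)*k + t = (d:ℕ) := congrArg Fin.val ((hdiff j0).mp hne)
      have hdm : (d:ℕ)/k = ↑b' ∧ (d:ℕ)%k = t :=
        (Nat.div_mod_unique hk).mpr ⟨by rw [Nat.mul_comm k (↑b' : ℕ)]; omega, ht⟩
      have hx'e : x' = vtx k m y (↑b') t := by
        rw [hyu]; exact (vtx_vtx k m x' (↑b') t).symm
      rw [← hdm.1, ← hdm.2] at hx'e
      exact ⟨hdm.1, Or.inl hx'e⟩
    · have hne : y j0 ≠ z j0 := by
        rw [hyv, hzu]
        exact fun hh => (vtx_diff_iff k m x' (↑b') t j0).mpr hj0val hh.symm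
      have hval : (b':ℕ)*k + t = (d:ℕ) := congrArg Fin.val ((hdiff j0).mp hne)
      have hdm : (d:ℕ)/k = ↑b' ∧ (d:ℕ)%k = t :=
        (Nat.div_mod_unique hk).mpr ⟨by rw [Nat.mul_comm k (↑b' : ℕ)]; omega, ht⟩
      have hx'e : x' = vtx k m z (↑b') t := by
        rw [hzu]; exact (vtx_vtx k m x' (↑b') t).symm
      rw [← hdm.1, ← hdm.2] at hx'e
      rw [hvz] at hx'e
      exact ⟨hdm.1, Or.inr hx'e⟩
  by_cases h0 : par k m ((d:ℕ)/k) x0 = 0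
  · refine ⟨⟨(⟨(d:ℕ)/k, hb⟩, x0), h0⟩, ?_, ?_⟩
    · exact Subgraph.mem_edgeSet.mpr ⟨(d:ℕ)%k, hi, by rw [hx0y, hx0z]⟩
    · rintro ⟨⟨b', x'⟩, hp'⟩ hm'
      obtain ⟨hbeq, hx⟩ := key b' x' hm'
      rcases hx with rfl | rfl
      · exact Subtype.ext (Prod.ext (Fin.ext hbeq.symm) rfl)
      · exfalso
        rw [← hbeq, hpar1, h0] at hp'
        simp at hp'
  · have h1 : par k m ((d:ℕ)/k) x1 = 0 := by
      rw [hpar1, z2'' _ h0]; decide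
    refine ⟨⟨(⟨(d:ℕ)/k, hb⟩, x1), h1⟩, ?_, ?_⟩
    · refine Subgraph.mem_edgeSet.mpr ⟨(d:ℕ)%k, hi, ?_⟩
      rw [hx1z, hx1y]; exact Sym2.eq_swap
    · rintro ⟨⟨b', x'⟩, hp'⟩ hm'
      obtain ⟨hbeq, hx⟩ := key b' x' hm'
      rcases hx with rfl | rfl
      · exact absurd (by rw [hbeq]; exact hp') h0
      · exact Subtype.ext (Prod.ext (Fin.ext hbeq.symm) rfl)

end PDC


theorem path_divides_cube_of_dvd (k n : ℕ) (h : k ∣ n) :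
    GraphDivides (pathGraph (k + 1)) (cube n) := by
  obtain ⟨m, rfl⟩ := h
  rcases Nat.eq_zero_or_pos k with rfl | hk
  · refine ⟨Empty, Empty.elim, fun i => i.elim, fun e he => ?_⟩
    exfalso
    revert he
    refine Sym2.ind (fun y z he => ?_) e
    have : y = z := by funext j; exact absurd j.isLt (by omega)
    exact (cube _).loopless.irrefl y (this ▸ he)
  · exact PDC.aux k m hk
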